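/- arXiv:1912.05830 — 2 statements merged into one kernel-verified Lean document; each statement's English description precedes it below -/
import Mathlib

section
/- Single-episode value decomposition identity: Fix a policy π, functions Q_h : S × A → ℝ for h ∈ [H], define V_h(x) = Σ_{a} π_h(a|x)·Q_h(x,a) for h ∈ [H] and V_{H+1} ≡ 0, and define the model prediction error ι_h = r_h + P_h V_{h+1} − Q_h. Let (x_1, a_1, x_2, a_2, …, x_H, a_H, x_{H+1}) be any sequence with x_h ∈ S and a_h ∈ A. Define D_{h,1} = Σ_{a} π_h(a|x_h)·(Q_h − Q^π_h)(x_h,a) − (Q_h − Q^π_h)(x_h,a_h) and D_{h,2} = (P_h(V_{h+1} − V^π_{h+1}))(x_h,a_h) − (V_{h+1} − V^π_{h+1})(x_{h+1}). Then V_1(x_1) − V^π_1(x_1) = − Σ_{h=1}^{H} ι_h(x_h,a_h) + Σ_{h=1}^{H} (D_{h,1} + D_{h,2}). -/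
open Finset

variable {S A : Type*}

/-- Value function computed with `n` remaining recursion steps, at step `h`. -/
noncomputable def Vrem [Fintype S] [Fintype A] (P : ℕ → S → A → S → ℝ)
    (r : ℕ → S → A → ℝ) (po : ℕ → S → A → ℝ) : ℕ → ℕ → S → ℝ
  | 0, _, _ => 0
  | (n+1), h, x => ∑ a, po h x a * (r h x a + ∑ x', P h x a x' * Vrem P r po n (h+1) x')

/-- Value function `V^π_h` of policy `po` in the episodic MDP with horizon `H`. -/
noncomputable def Vval [Fintype S] [Fintype A] (H : ℕ) (P : ℕ → S → A → S → ℝ)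
    (r : ℕ → S → A → ℝ) (po : ℕ → S → A → ℝ) (h : ℕ) (x : S) : ℝ :=
  Vrem P r po (H + 1 - h) h x

/-- Action-value function `Q^π_h` of policy `po`. -/
noncomputable def Qval [Fintype S] [Fintype A] (H : ℕ) (P : ℕ → S → A → S → ℝ)
    (r : ℕ → S → A → ℝ) (po : ℕ → S → A → ℝ) (h : ℕ) (x : S) (a : A) : ℝ :=
  r h x a + ∑ x', P h x a x' * Vval H P r po (h+1) x'


lemma Vval_eq_sum [Fintype S] [Fintype A] (H : ℕ) (P : ℕ → S → A → S → ℝ)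
    (r : ℕ → S → A → ℝ) (po : ℕ → S → A → ℝ) (h : ℕ) (hh : h ≤ H) (x : S) :
    Vval H P r po h x = ∑ a, po h x a * Qval H P r po h x a := by
  have h1 : H + 1 - h = (H - h) + 1 := by omega
  have h2 : H + 1 - (h + 1) = H - h := by omega
  rw [Vval, h1, Vrem]
  simp only [Qval, Vval, h2]

lemma sum_Icc_telescope (g : ℕ → ℝ) (H : ℕ) :
    ∑ h ∈ Finset.Icc 1 H, (g h - g (h+1)) = g 1 - g (H+1) := by
  induction H with
  | zero => simp
  | succ n ih => rw [Finset.sum_Icc_succ_top (by omega), ih]; ring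

/-- Single-episode value decomposition identity. -/
theorem single_episode_decomposition [Fintype S] [Fintype A] [Nonempty A]
    (H : ℕ) (hH : 1 ≤ H)
    (P : ℕ → S → A → S → ℝ)
    (hP0 : ∀ h ∈ Finset.Icc 1 H, ∀ x a x', 0 ≤ P h x a x')
    (hP1 : ∀ h ∈ Finset.Icc 1 H, ∀ x a, ∑ x', P h x a x' = 1)
    (r : ℕ → S → A → ℝ)
    (hr : ∀ h ∈ Finset.Icc 1 H, ∀ x a, 0 ≤ r h x a ∧ r h x a ≤ 1)
    (po : ℕ → S → A → ℝ)
    (hpo0 : ∀ h ∈ Finset.Icc 1 H, ∀ x a, 0 ≤ po h x a)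
    (hpo1 : ∀ h ∈ Finset.Icc 1 H, ∀ x, ∑ a, po h x a = 1)
    (Q : ℕ → S → A → ℝ) (V : ℕ → S → ℝ)
    (hV : ∀ h ∈ Finset.Icc 1 H, ∀ x, V h x = ∑ a, po h x a * Q h x a)
    (hVend : ∀ x, V (H+1) x = 0)
    (xs : ℕ → S) (as : ℕ → A) :
    V 1 (xs 1) - Vval H P r po 1 (xs 1) =
      -(∑ h ∈ Finset.Icc 1 H,
          (r h (xs h) (as h) + (∑ x', P h (xs h) (as h) x' * V (h+1) x')
            - Q h (xs h) (as h)))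
      + ∑ h ∈ Finset.Icc 1 H,
          (((∑ a, po h (xs h) a * (Q h (xs h) a - Qval H P r po h (xs h) a))
              - (Q h (xs h) (as h) - Qval H P r po h (xs h) (as h)))
            + ((∑ x', P h (xs h) (as h) x' * (V (h+1) x' - Vval H P r po (h+1) x'))
              - (V (h+1) (xs (h+1)) - Vval H P r po (h+1) (xs (h+1))))) := by
  set g : ℕ → ℝ := fun h => V h (xs h) - Vval H P r po h (xs h) with hg
  rw [neg_add_eq_sub, ← Finset.sum_sub_distrib]
  have key : ∀ h ∈ Finset.Icc 1 H,
      ((((∑ a, po h (xs h) a * (Q h (xs h) a - Qval H P r po h (xs h) a))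
              - (Q h (xs h) (as h) - Qval H P r po h (xs h) (as h)))
            + ((∑ x', P h (xs h) (as h) x' * (V (h+1) x' - Vval H P r po (h+1) x'))
              - (V (h+1) (xs (h+1)) - Vval H P r po (h+1) (xs (h+1)))))
        - ((r h (xs h) (as h) + (∑ x', P h (xs h) (as h) x' * V (h+1) x'))
            - Q h (xs h) (as h))) = g h - g (h+1) := by
    intro h hh
    rw [Finset.mem_Icc] at hh
    have e1 : ∑ a, po h (xs h) a * (Q h (xs h) a - Qval H P r po h (xs h) a)
        = (∑ a, po h (xs h) a * Q h (xs h) a)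
          - ∑ a, po h (xs h) a * Qval H P r po h (xs h) a := by
      rw [← Finset.sum_sub_distrib]; congr 1; ext a; ring
    have e2 : ∑ x', P h (xs h) (as h) x' * (V (h+1) x' - Vval H P r po (h+1) x')
        = (∑ x', P h (xs h) (as h) x' * V (h+1) x')
          - ∑ x', P h (xs h) (as h) x' * Vval H P r po (h+1) x' := by
      rw [← Finset.sum_sub_distrib]; congr 1; ext x'; ring
    rw [e1, e2, ← hV h (by simp [Finset.mem_Icc]; omega) (xs h),
      ← Vval_eq_sum H P r po h hh.2 (xs h), Qval]
    simp only [hg]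
    ring
  rw [Finset.sum_congr rfl key]
  have tele : ∑ h ∈ Finset.Icc 1 H, (g h - g (h+1)) = g 1 - g (H+1) := by
    exact sum_Icc_telescope g H
  rw [tele]
  have hend : g (H+1) = 0 := by
    simp [hg, hVend, Vval, Vrem]
  rw [hend, sub_zero]
end

section
/- Elliptical potential lemma, second part: Let Λ₀ be a d × d real symmetric positive-definite matrix whose smallest eigenvalue is at least 1, let φ_1, φ_2, … be vectors in ℝ^d with ‖φ_j‖₂ ≤ 1 for all j, and define Λ_j = Λ₀ + Σ_{i=1}^{j−1} φ_i φ_iᵀ for j ≥ 1 (so Λ_1 = Λ₀). Then for every t ≥ 1, log( det(Λ_{t+1}) / det(Λ_1) ) ≤ Σ_{j=1}^{t} φ_jᵀ Λ_j^{−1} φ_j ≤ 2 · log( det(Λ_{t+1}) / det(Λ_1) ). -/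
open Matrix Finset

private lemma vecMulVec_posSemidef {d : ℕ} (u : Fin d → ℝ) :
    (vecMulVec u u).PosSemidef := by
  refine PosSemidef.of_dotProduct_mulVec_nonneg ?_ ?_
  · ext i j; simp [vecMulVec_apply, conjTranspose_apply, mul_comm]
  · intro x
    have h : (vecMulVec u u) *ᵥ x = (u ⬝ᵥ x) • u := by
      ext i
      simp only [vecMulVec_apply, mulVec, dotProduct, Pi.smul_apply, smul_eq_mul,
        Finset.sum_mul]
      apply Finset.sum_congr rfl
      intros; ring
    rw [h, star_trivial]
    have : x ⬝ᵥ ((u ⬝ᵥ x) • u) = (u ⬝ᵥ x) * (x ⬝ᵥ u) := by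
      simp [dotProduct, Finset.mul_sum]
      apply Finset.sum_congr rfl
      intros; ring
    rw [this, dotProduct_comm]
    exact mul_self_nonneg _

private lemma log_bounds {x : ℝ} (h0 : 0 ≤ x) (h1 : x ≤ 1) :
    Real.log (1 + x) ≤ x ∧ x ≤ 2 * Real.log (1 + x) := by
  have hx : (0:ℝ) < 1 + x := by linarith
  constructor
  · have := Real.log_le_sub_one_of_pos hx
    linarith
  · have h2 := Real.log_le_sub_one_of_pos (x := (1 + x)⁻¹) (by positivity)
    rw [Real.log_inv] at h2
    have h3 : (1 + x)⁻¹ - 1 = -(x / (1 + x)) := by field_simp; ring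
    have h4 : x / (1 + x) ≤ Real.log (1 + x) := by
      rw [h3] at h2; linarith
    have h5 : x / 2 ≤ x / (1 + x) := by
      apply div_le_div_of_nonneg_left h0 hx (by linarith)
    linarith

private lemma det_one_add_row_mul_col {d : ℕ} (A : Matrix (Fin d) (Fin d) ℝ)
    (u v : Fin d → ℝ) :
    (1 + replicateRow Unit v * A * replicateCol Unit u).det = 1 + v ⬝ᵥ (A *ᵥ u) := by
  rw [det_unique]
  simp [Matrix.mul_apply, dotProduct, mulVec, Finset.mul_sum, Finset.sum_mul, mul_assoc]
  rw [Finset.sum_comm]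

/-- Elliptical potential lemma, second part. -/
theorem elliptical_potential_two (d : ℕ)
    (Λ₀ : Matrix (Fin d) (Fin d) ℝ) (hΛ₀ : Λ₀.PosDef)
    (hΛ₀min : (Λ₀ - (1 : Matrix (Fin d) (Fin d) ℝ)).PosSemidef)
    (φ : ℕ → Fin d → ℝ)
    (hφ : ∀ j, Real.sqrt (∑ i, (φ j i) ^ 2) ≤ 1)
    (Λ : ℕ → Matrix (Fin d) (Fin d) ℝ)
    (hΛ : ∀ j, Λ j = Λ₀ + ∑ i ∈ Finset.Icc 1 (j - 1), vecMulVec (φ i) (φ i))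
    (t : ℕ) (ht : 1 ≤ t) :
    Real.log ((Λ (t + 1)).det / (Λ 1).det) ≤
        ∑ j ∈ Finset.Icc 1 t, φ j ⬝ᵥ ((Λ j)⁻¹ *ᵥ φ j) ∧
      ∑ j ∈ Finset.Icc 1 t, φ j ⬝ᵥ ((Λ j)⁻¹ *ᵥ φ j) ≤
        2 * Real.log ((Λ (t + 1)).det / (Λ 1).det) := by
  -- abbreviation
  set s : ℕ → ℝ := fun j => φ j ⬝ᵥ ((Λ j)⁻¹ *ᵥ φ j) with hs
  -- positivity of the Λ j
  have hsumPSD : ∀ j, (∑ i ∈ Finset.Icc 1 (j - 1), vecMulVec (φ i) (φ i)).PosSemidef := by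
    intro j
    apply Finset.sum_induction (fun i => vecMulVec (φ i) (φ i)) Matrix.PosSemidef
      (fun A B hA hB => hA.add hB) Matrix.PosSemidef.zero
    intro i _
    exact vecMulVec_posSemidef (φ i)
  have hpos : ∀ j, (Λ j).PosDef := by
    intro j
    rw [hΛ j]
    exact hΛ₀.add_posSemidef (hsumPSD j)
  have hge : ∀ j, ((Λ j) - 1).PosSemidef := by
    intro j
    have : (Λ j) - 1 = (Λ₀ - 1) + ∑ i ∈ Finset.Icc 1 (j - 1), vecMulVec (φ i) (φ i) := by
      rw [hΛ j, add_sub_right_comm]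
    rw [this]
    exact hΛ₀min.add (hsumPSD j)
  -- bounds on s j
  have hφ2 : ∀ j, φ j ⬝ᵥ φ j ≤ 1 := by
    intro j
    have h1 := hφ j
    have h2 : (0:ℝ) ≤ ∑ i, (φ j i) ^ 2 := Finset.sum_nonneg fun i _ => sq_nonneg _
    have h3 : ∑ i, (φ j i) ^ 2 ≤ 1 := by
      nlinarith [Real.sq_sqrt h2, Real.sqrt_nonneg (∑ i, (φ j i) ^ 2)]
    calc φ j ⬝ᵥ φ j = ∑ i, (φ j i) ^ 2 := by
          simp [dotProduct, sq]
      _ ≤ 1 := h3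
  have hkey : ∀ j, 0 ≤ s j ∧ s j ≤ 1 := by
    intro j
    set A := Λ j with hA
    set ψ : Fin d → ℝ := A⁻¹ *ᵥ φ j with hψ
    have hdet : IsUnit A.det := isUnit_iff_ne_zero.mpr (hpos j).det_pos.ne'
    have hAψ : A *ᵥ ψ = φ j := by
      rw [hψ, mulVec_mulVec, Matrix.mul_nonsing_inv A hdet, one_mulVec]
    -- ψ ⬝ᵥ ψ ≤ ψ ⬝ᵥ (A *ᵥ ψ) = s j
    have h1 : ψ ⬝ᵥ ψ ≤ s j := by
      have h0 := (hge j).dotProduct_mulVec_nonneg ψ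
      rw [star_trivial, sub_mulVec, dotProduct_sub, one_mulVec] at h0
      have h2 : ψ ⬝ᵥ (A *ᵥ ψ) = s j := by
        rw [hAψ, dotProduct_comm]
      linarith
    have hψψ : (0:ℝ) ≤ ψ ⬝ᵥ ψ := by
      simp only [dotProduct]
      exact Finset.sum_nonneg fun i _ => mul_self_nonneg _
    have hs0 : 0 ≤ s j := le_trans hψψ h1
    -- Cauchy-Schwarz
    have hsψ : s j = φ j ⬝ᵥ ψ := rfl
    have hcs : (s j) ^ 2 ≤ (φ j ⬝ᵥ φ j) * (ψ ⬝ᵥ ψ) := by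
      rw [hsψ]
      simpa [dotProduct, sq] using
        Finset.sum_mul_sq_le_sq_mul_sq Finset.univ (φ j) ψ
    have hφφ : (0:ℝ) ≤ φ j ⬝ᵥ φ j := by
      simp only [dotProduct]
      exact Finset.sum_nonneg fun i _ => mul_self_nonneg _
    have : (s j) ^ 2 ≤ s j := by
      calc (s j) ^ 2 ≤ (φ j ⬝ᵥ φ j) * (ψ ⬝ᵥ ψ) := hcs
        _ ≤ 1 * (ψ ⬝ᵥ ψ) := by
            apply mul_le_mul_of_nonneg_right (hφ2 j) hψψ
        _ = ψ ⬝ᵥ ψ := one_mul _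
        _ ≤ s j := h1
    exact ⟨hs0, by nlinarith⟩
  -- determinant recursion
  have hstep : ∀ n : ℕ, 1 ≤ n → (Λ (n + 1)).det = (Λ n).det * (1 + s n) := by
    intro n hn
    have hΛsucc : Λ (n + 1) = Λ n + vecMulVec (φ n) (φ n) := by
      rw [hΛ (n + 1), hΛ n]
      have h1 : n + 1 - 1 = n := rfl
      rw [h1]
      obtain ⟨m, rfl⟩ := Nat.exists_eq_add_of_le hn
      have h2 : 1 + m - 1 = m := by omega
      rw [h2, add_comm 1 m]
      rw [Finset.sum_Icc_succ_top (by omega : 1 ≤ m + 1)]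
      rw [← add_assoc]
    have hdet : IsUnit (Λ n).det := isUnit_iff_ne_zero.mpr (hpos n).det_pos.ne'
    rw [hΛsucc, vecMulVec_eq Unit (φ n) (φ n), det_add_replicateCol_mul_replicateRow hdet,
      det_one_add_row_mul_col]
  -- product formula
  have hprod : ∀ n : ℕ, (Λ (n + 1)).det = (Λ 1).det * ∏ j ∈ Finset.Icc 1 n, (1 + s j) := by
    intro n
    induction n with
    | zero => simp
    | succ m ih =>
      rw [hstep (m + 1) (by omega), ih, Finset.prod_Icc_succ_top (by omega : 1 ≤ m + 1)]
      ring
  -- log of the ratio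
  have hdet1 : (0:ℝ) < (Λ 1).det := (hpos 1).det_pos
  have hposfac : ∀ j, (0:ℝ) < 1 + s j := fun j => by
    have := (hkey j).1; linarith
  have hlog : Real.log ((Λ (t + 1)).det / (Λ 1).det) =
      ∑ j ∈ Finset.Icc 1 t, Real.log (1 + s j) := by
    rw [hprod t, mul_comm, mul_div_assoc, div_self hdet1.ne', mul_one]
    rw [Real.log_prod]
    intro j _
    exact (hposfac j).ne'
  rw [hlog]
  constructor
  · apply Finset.sum_le_sum
    intro j _
    exact (log_bounds (hkey j).1 (hkey j).2).1
  · rw [Finset.mul_sum]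
    apply Finset.sum_le_sum
    intro j _
    exact (log_bounds (hkey j).1 (hkey j).2).2
end
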